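/- Let σ ≥ 3/2, S > 0, B₀ > 0, Λ > 0, C ≥ 0, let N be a natural number and μ : Fin N → ℝ. Assume that for every t ≥ 0 one has ∑_{j} (t − μ_j)₊ ≤ S·((t²−B₀²)₊/(8π) + (t−B₀)₊·B₀·C/(4π)). Then ∑_{j} (Λ − μ_j)₊^{σ+1/2} ≤ (Γ(σ+3/2)·Λ^{σ−1/2}·S/(Γ(σ−1/2)·(2σ−1)))·((Λ²−B₀²)₊/(4π) + (Λ−B₀)₊·B₀·C/(2π)). -/

import Mathlib

open Real


lemma AL_key {m Λ x : ℝ} (hm : 0 ≤ m) (hΛ : 0 < Λ) (hx : x ≤ Λ) :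
    ∫ t in (0:ℝ)..Λ, t ^ m * max (x - t) 0
      = (max x 0) ^ (m + 2) / ((m + 1) * (m + 2)) := by
  have hm1 : (0:ℝ) < m + 1 := by linarith
  have hm2 : (0:ℝ) < m + 2 := by linarith
  by_cases hx0 : x ≤ 0
  · have : ∫ t in (0:ℝ)..Λ, t ^ m * max (x - t) 0 = ∫ t in (0:ℝ)..Λ, (0:ℝ) := by
      apply intervalIntegral.integral_congr
      intro t ht
      rw [Set.uIcc_of_le hΛ.le] at ht
      have : x - t ≤ 0 := by linarith [ht.1]
      simp [max_eq_right this]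
    rw [this, intervalIntegral.integral_zero, max_eq_right hx0,
      Real.zero_rpow (by positivity), zero_div]
  · push_neg at hx0
    have hc : Continuous (fun t : ℝ => t ^ m * max (x - t) 0) :=
      (Real.continuous_rpow_const hm).mul
        ((continuous_const.sub continuous_id).max continuous_const)
    rw [← intervalIntegral.integral_add_adjacent_intervals
      (hc.intervalIntegrable 0 x) (hc.intervalIntegrable x Λ)]
    have h2 : ∫ t in x..Λ, t ^ m * max (x - t) 0 = ∫ t in x..Λ, (0:ℝ) := by
      apply intervalIntegral.integral_congr
      intro t ht
      rw [Set.uIcc_of_le hx] at ht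
      have : x - t ≤ 0 := by linarith [ht.1]
      simp [max_eq_right this]
    rw [h2, intervalIntegral.integral_zero, add_zero]
    have h1 : ∫ t in (0:ℝ)..x, t ^ m * max (x - t) 0
        = ∫ t in (0:ℝ)..x, (x * t ^ m - t ^ (m + 1)) := by
      apply intervalIntegral.integral_congr
      intro t ht
      rw [Set.uIcc_of_le hx0.le] at ht
      have h1 : (0:ℝ) ≤ x - t := by linarith [ht.2]
      show t ^ m * max (x - t) 0 = x * t ^ m - t ^ (m + 1)
      rw [max_eq_left h1]
      rcases eq_or_lt_of_le ht.1 with h0 | h0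
      · rw [← h0, Real.zero_rpow (ne_of_gt hm1)]; ring
      · rw [Real.rpow_add_one (ne_of_gt h0) m]; ring
    rw [h1, intervalIntegral.integral_sub (f := fun t : ℝ => x * t ^ m) (g := fun t : ℝ => t ^ (m + 1))
        ((continuous_const.mul (Real.continuous_rpow_const hm) :
          Continuous fun t : ℝ => x * t ^ m).intervalIntegrable 0 x)
        ((Real.continuous_rpow_const (by linarith : (0:ℝ) ≤ m + 1)).intervalIntegrable 0 x),
      intervalIntegral.integral_const_mul, integral_rpow (Or.inl (by linarith)),
      integral_rpow (Or.inl (by linarith)), max_eq_left hx0.le]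
    rw [show m + 2 = m + 1 + 1 by ring, Real.zero_rpow (ne_of_gt hm1),
      Real.zero_rpow (ne_of_gt (by linarith : (0:ℝ) < m + 1 + 1)),
      Real.rpow_add_one (ne_of_gt hx0) (m + 1)]
    generalize x ^ (m + 1) = A
    field_simp
    ring


/-- The Aizenman–Lieb lifting argument of Remark 3.3: from a Berezin-type bound on the first
eigenvalue moment (valid for all `t ≥ 0`) one deduces a bound for the moment of order
`σ + 1/2`.  Here `max x 0` is the positive part and `Real.Gamma` the Gamma function. -/
theorem aizenman_lieb_lifting
    (σ S B₀ Λ C : ℝ) (hσ : 3 / 2 ≤ σ) (hS : 0 < S) (hB₀ : 0 < B₀) (hΛ : 0 < Λ)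
    (hC : 0 ≤ C) (N : ℕ) (μ : Fin N → ℝ)
    (h : ∀ t : ℝ, 0 ≤ t →
      ∑ j, max (t - μ j) 0
        ≤ S * (max (t ^ 2 - B₀ ^ 2) 0 / (8 * π) + max (t - B₀) 0 * B₀ * C / (4 * π))) :
    ∑ j, max (Λ - μ j) 0 ^ (σ + 1 / 2)
      ≤ Real.Gamma (σ + 3 / 2) * Λ ^ (σ - 1 / 2) * S
          / (Real.Gamma (σ - 1 / 2) * (2 * σ - 1))
        * (max (Λ ^ 2 - B₀ ^ 2) 0 / (4 * π) + max (Λ - B₀) 0 * B₀ * C / (2 * π)) := by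
  have hπ := Real.pi_pos
  set m := σ - 3 / 2 with hm_def
  have hm : (0:ℝ) ≤ m := by rw [hm_def]; linarith
  have hm1 : (0:ℝ) < m + 1 := by linarith
  have hm2 : (0:ℝ) < m + 2 := by linarith
  -- all μ j are nonnegative
  have hμ : ∀ j, 0 ≤ μ j := by
    intro j
    have h0 := h 0 le_rfl
    rw [max_eq_right (by nlinarith : (0:ℝ) ^ 2 - B₀ ^ 2 ≤ 0),
      max_eq_right (by linarith : (0:ℝ) - B₀ ≤ 0)] at h0
    simp only [zero_div, zero_mul, add_zero, mul_zero] at h0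
    have h1 : max (0 - μ j) 0 ≤ ∑ i, max (0 - μ i) 0 :=
      Finset.single_le_sum (f := fun i => max (0 - μ i) 0)
        (fun i _ => le_max_right _ _) (Finset.mem_univ j)
    have h2 : (0:ℝ) - μ j ≤ max (0 - μ j) 0 := le_max_left _ _
    linarith
  have hΓpos : 0 < Real.Gamma (σ - 1 / 2) := Real.Gamma_pos_of_pos (by linarith)
  have hΓ : Real.Gamma (σ + 3 / 2)
      = (σ + 1 / 2) * ((σ - 1 / 2) * Real.Gamma (σ - 1 / 2)) := by
    rw [show σ + 3 / 2 = (σ + 1 / 2) + 1 by ring,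
      Real.Gamma_add_one (by intro hh; nlinarith : σ + 1 / 2 ≠ 0),
      show σ + 1 / 2 = (σ - 1 / 2) + 1 by ring,
      Real.Gamma_add_one (by intro hh; nlinarith : σ - 1 / 2 ≠ 0)]
  set K := S * (max (Λ ^ 2 - B₀ ^ 2) 0 / (8 * π) + max (Λ - B₀) 0 * B₀ * C / (4 * π)) with hK
  have hcont : ∀ j : Fin N, Continuous (fun t : ℝ => t ^ m * max ((Λ - μ j) - t) 0) :=
    fun j => (Real.continuous_rpow_const hm).mul
      ((continuous_const.sub continuous_id).max continuous_const)
  have hexp : σ + 1 / 2 = m + 2 := by rw [hm_def]; ring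
  calc ∑ j, max (Λ - μ j) 0 ^ (σ + 1 / 2)
      = ∑ j, ((m + 1) * (m + 2)) * ∫ t in (0:ℝ)..Λ, t ^ m * max ((Λ - μ j) - t) 0 := by
        apply Finset.sum_congr rfl
        intro j _
        rw [AL_key hm hΛ (by linarith [hμ j]), hexp, mul_comm,
          div_mul_cancel₀ _ (by positivity : (m + 1) * (m + 2) ≠ 0)]
    _ = ((m + 1) * (m + 2)) * ∫ t in (0:ℝ)..Λ, t ^ m * ∑ j, max ((Λ - μ j) - t) 0 := by
        rw [← Finset.mul_sum]
        congr 1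
        rw [← intervalIntegral.integral_finset_sum
          (fun j _ => (hcont j).intervalIntegrable 0 Λ)]
        exact intervalIntegral.integral_congr fun t _ => by
          show ∑ j, t ^ m * max ((Λ - μ j) - t) 0 = t ^ m * ∑ j, max ((Λ - μ j) - t) 0
          rw [Finset.mul_sum]
    _ ≤ ((m + 1) * (m + 2)) * ∫ t in (0:ℝ)..Λ, t ^ m * K := by
        apply mul_le_mul_of_nonneg_left _ (by positivity)
        apply intervalIntegral.integral_mono_on hΛ.le
          (((Real.continuous_rpow_const hm).mul
            (continuous_finset_sum _ fun j _ =>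
              (continuous_const.sub continuous_id).max continuous_const)).intervalIntegrable 0 Λ)
          (((Real.continuous_rpow_const hm).mul continuous_const).intervalIntegrable 0 Λ)
        intro t ht
        show t ^ m * ∑ j, max ((Λ - μ j) - t) 0 ≤ t ^ m * K
        apply mul_le_mul_of_nonneg_left _ (Real.rpow_nonneg ht.1 m)
        have hb := h (Λ - t) (by linarith [ht.2])
        have he : ∑ j, max ((Λ - μ j) - t) 0 = ∑ j, max ((Λ - t) - μ j) 0 := by
          apply Finset.sum_congr rfl
          intro j _
          congr 1
          ring
        rw [he, hK]
        refine le_trans hb ?_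
        have h1 : max ((Λ - t) ^ 2 - B₀ ^ 2) 0 ≤ max (Λ ^ 2 - B₀ ^ 2) 0 :=
          max_le_max (by nlinarith [ht.1, ht.2]) le_rfl
        have h2 : max ((Λ - t) - B₀) 0 ≤ max (Λ - B₀) 0 :=
          max_le_max (by linarith [ht.1]) le_rfl
        gcongr
    _ = ((m + 1) * (m + 2)) * ((Λ ^ (m + 1) - (0:ℝ) ^ (m + 1)) / (m + 1) * K) := by
        rw [intervalIntegral.integral_mul_const, integral_rpow (Or.inl (by linarith))]
    _ ≤ Real.Gamma (σ + 3 / 2) * Λ ^ (σ - 1 / 2) * S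
          / (Real.Gamma (σ - 1 / 2) * (2 * σ - 1))
        * (max (Λ ^ 2 - B₀ ^ 2) 0 / (4 * π) + max (Λ - B₀) 0 * B₀ * C / (2 * π)) := by
        apply le_of_eq
        rw [hΓ, Real.zero_rpow (ne_of_gt hm1), hK,
          show σ - 1 / 2 = m + 1 by rw [hm_def]; ring]
        have h2σ : 2 * σ - 1 ≠ 0 := by intro hh; nlinarith
        field_simp
        ring
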